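/- Under the hypotheses of the previous lemma, if additionally c ≠ 0, then f(0), f(1) ∈ [0,1] and f(0) + f(1) = 1. -/

import Mathlib

open Finset Filter Topology

/-- Partition identity: summing over all patterns of the first `k` coordinates
recovers the total sum. -/
lemma stmt_5_aux_part {M : Type*} [AddCommMonoid M] {n k : ℕ} (hn : k ≤ n)
    (F : (Fin n → Bool) → M) :
    ∑ x : Fin k → Bool, ∑ y ∈ univ.filter
        (fun y : Fin n → Bool => ∀ i : Fin n, (h : (i : ℕ) < k) → y i = x ⟨i, h⟩), F y
      = ∑ y : Fin n → Bool, F y := by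
  have key := Finset.sum_fiberwise (univ : Finset (Fin n → Bool))
    (fun y => fun r : Fin k => y (Fin.castLE hn r)) F
  rw [← key]
  refine Finset.sum_congr rfl fun x _ => Finset.sum_congr ?_ fun _ _ => rfl
  ext y
  simp only [mem_filter, mem_univ, true_and]
  constructor
  · intro h
    funext r
    exact h (Fin.castLE hn r) r.2
  · intro h i hi
    have := congrFun h ⟨(i : ℕ), hi⟩
    simpa [Fin.castLE, Fin.ext_iff] using this

/-- Key combinatorial lemma, part (ii).  Let `f n : {0,1}^n → ℂ` be symmetric with
`∑_x |f n x| ≤ B`, and suppose that for each fixed `k` and `x ∈ {0,1}^k` the partial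
sums over the remaining coordinates converge to `c · g(x₁)⋯g(x_k)`.  If `c ≠ 0`,
then `g(0)` and `g(1)` are real numbers in `[0,1]` and `g(0) + g(1) = 1`. -/
theorem stmt_5 (f : (n : ℕ) → (Fin n → Bool) → ℂ) (B : ℝ) (c : ℂ) (g : Bool → ℂ)
    (hsym : ∀ n (π : Equiv.Perm (Fin n)) (x : Fin n → Bool), f n (x ∘ π) = f n x)
    (hB : ∀ n, ∑ x : Fin n → Bool, ‖f n x‖ ≤ B)
    (hmarg : ∀ (k : ℕ) (x : Fin k → Bool),
      Tendsto (fun n => ∑ y ∈ univ.filter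
            (fun y : Fin n → Bool => ∀ i : Fin n, (h : (i : ℕ) < k) → y i = x ⟨i, h⟩),
          f n y)
        atTop (𝓝 (c * ∏ r : Fin k, g (x r))))
    (hc : c ≠ 0) :
    (∀ b : Bool, (g b).im = 0 ∧ (g b).re ∈ Set.Icc (0 : ℝ) 1) ∧
      g false + g true = 1 := by
  set s : ℝ := ‖g false‖ + ‖g true‖ with hs_def
  -- Step 1: for every k, |c| * s ^ k ≤ B
  have key : ∀ k : ℕ, ‖c‖ * s ^ k ≤ B := by
    intro k
    have hlim : Tendsto (fun n => ∑ x : Fin k → Bool, ‖∑ y ∈ univ.filter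
          (fun y : Fin n → Bool => ∀ i : Fin n, (h : (i : ℕ) < k) → y i = x ⟨i, h⟩), f n y‖)
        atTop (𝓝 (∑ x : Fin k → Bool, ‖c * ∏ r : Fin k, g (x r)‖)) :=
      tendsto_finset_sum _ fun x _ => (continuous_norm.tendsto _).comp (hmarg k x)
    have hle : ∀ᶠ n in atTop, (∑ x : Fin k → Bool, ‖∑ y ∈ univ.filter
          (fun y : Fin n → Bool => ∀ i : Fin n, (h : (i : ℕ) < k) → y i = x ⟨i, h⟩), f n y‖) ≤ B := by
      filter_upwards [eventually_ge_atTop k] with n hn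
      calc ∑ x : Fin k → Bool, ‖∑ y ∈ univ.filter
              (fun y : Fin n → Bool => ∀ i : Fin n, (h : (i : ℕ) < k) → y i = x ⟨i, h⟩), f n y‖
          ≤ ∑ x : Fin k → Bool, ∑ y ∈ univ.filter
              (fun y : Fin n → Bool => ∀ i : Fin n, (h : (i : ℕ) < k) → y i = x ⟨i, h⟩),
              ‖f n y‖ := by
            refine Finset.sum_le_sum fun x _ => ?_
            simpa using (norm_sum_le _ (f n)).trans_eq rfl
        _ = ∑ y : Fin n → Bool, ‖f n y‖ := stmt_5_aux_part hn _
        _ ≤ B := hB n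
    have hB' := le_of_tendsto hlim hle
    have hcomp : (∑ x : Fin k → Bool, ‖c * ∏ r : Fin k, g (x r)‖)
        = ‖c‖ * s ^ k := by
      simp only [norm_mul, norm_prod, ← Finset.mul_sum]
      congr 1
      have := Finset.prod_univ_sum (fun _ : Fin k => (univ : Finset Bool))
        (fun _ b => ‖g b‖)
      rw [Fintype.piFinset_univ] at this
      rw [← this]
      simp [hs_def, add_comm]
    rwa [hcomp] at hB'
  -- Step 2: s ≤ 1
  have habs : ‖c‖ > 0 := norm_pos_iff.mpr hc
  have hs1 : s ≤ 1 := by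
    by_contra h
    push_neg at h
    obtain ⟨k, hk⟩ := pow_unbounded_of_one_lt (B / ‖c‖) h
    have := key k
    rw [mul_comm, ← le_div_iff₀ habs] at this
    exact absurd this (not_le.mpr hk)
  -- Step 3: g false + g true = 1
  have hsum : g false + g true = 1 := by
    have h0 : Tendsto (fun n => ∑ y : Fin n → Bool, f n y) atTop (𝓝 c) := by
      have := hmarg 0 (fun i => i.elim0)
      simpa [Finset.filter_true_of_mem] using this
    have h1 : Tendsto (fun n => ∑ y : Fin n → Bool, f n y) atTop
        (𝓝 (∑ x : Fin 1 → Bool, c * ∏ r : Fin 1, g (x r))) := by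
      have hlim : Tendsto (fun n => ∑ x : Fin 1 → Bool, ∑ y ∈ univ.filter
            (fun y : Fin n → Bool => ∀ i : Fin n, (h : (i : ℕ) < 1) → y i = x ⟨i, h⟩), f n y)
          atTop (𝓝 (∑ x : Fin 1 → Bool, c * ∏ r : Fin 1, g (x r))) :=
        tendsto_finset_sum _ fun x _ => hmarg 1 x
      refine hlim.congr' ?_
      filter_upwards [eventually_ge_atTop 1] with n hn
      exact stmt_5_aux_part hn _
    have heq : c = ∑ x : Fin 1 → Bool, c * ∏ r : Fin 1, g (x r) :=
      tendsto_nhds_unique h0 h1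
    have hval : (∑ x : Fin 1 → Bool, c * ∏ r : Fin 1, g (x r)) = c * (g false + g true) := by
      rw [← Finset.mul_sum]
      congr 1
      have := Finset.prod_univ_sum (fun _ : Fin 1 => (univ : Finset Bool))
        (fun _ b => g b)
      rw [Fintype.piFinset_univ] at this
      rw [← this]
      simp [add_comm]
    rw [hval] at heq
    have : c * (g false + g true) = c * 1 := by rw [mul_one]; exact heq.symm
    exact mul_left_cancel₀ hc this
  -- Step 4: conclude
  have hre : (g false).re + (g true).re = 1 := by
    have := congrArg Complex.re hsum
    simpa using this
  have hra : (g false).re ≤ ‖g false‖ := Complex.re_le_norm _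
  have hrb : (g true).re ≤ ‖g true‖ := Complex.re_le_norm _
  have h1s : (1 : ℝ) ≤ s := by
    rw [← hre, hs_def]; exact add_le_add hra hrb
  have hseq : s = 1 := le_antisymm hs1 h1s
  have hfa : ‖g false‖ = (g false).re := by
    by_contra h
    have h' : (g false).re < ‖g false‖ := lt_of_le_of_ne hra (Ne.symm h)
    have : (1 : ℝ) < s := by
      calc (1:ℝ) = (g false).re + (g true).re := hre.symm
        _ < ‖g false‖ + ‖g true‖ := by
            exact add_lt_add_of_lt_of_le h' hrb
        _ = s := rfl
    exact absurd hs1 (not_le.mpr this)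
  have hfb : ‖g true‖ = (g true).re := by
    have : ‖g false‖ + ‖g true‖
        = (g false).re + (g true).re := by rw [hs_def] at hseq; rw [hseq, hre]
    linarith [hfa]
  have him : ∀ b : Bool, (g b).im = 0 := by
    intro b
    have habs_eq : ‖g b‖ = (g b).re := by cases b with
      | false => exact hfa
      | true => exact hfb
    have h2 : (g b).re ^ 2 + (g b).im ^ 2 = (g b).re ^ 2 := by
      have := Complex.sq_norm (g b)
      rw [habs_eq, Complex.normSq_apply] at this
      ring_nf
      ring_nf at this
      linarith
    have : (g b).im ^ 2 = 0 := by linarith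
    exact pow_eq_zero_iff (n := 2) (by norm_num) |>.mp this
  refine ⟨fun b => ⟨him b, ?_, ?_⟩, hsum⟩
  · cases b with
    | false => rw [← hfa]; exact norm_nonneg _
    | true => rw [← hfb]; exact norm_nonneg _
  · cases b with
    | false =>
      have : (g true).re ≥ 0 := by rw [← hfb]; exact norm_nonneg _
      linarith
    | true =>
      have : (g false).re ≥ 0 := by rw [← hfa]; exact norm_nonneg _
      linarith
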